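/- With the setup of the mixture model U₁₂ = θP₁₂+(1-θ)N₁₂, U₁₂' = θ'P₁₂+(1-θ')N₁₂ (θ≠θ'), the leading quadratic coefficient of m(α) equals a = -(θ-θ')² (E_{P₁}[g₁] - E_{N₁}[g₁]) (E_{P₂}[g₂] - E_{N₂}[g₂]). Consequently, if this product is nonzero and m has a real root, then m(α)=0 has exactly the two real roots of a quadratic with a ≠ 0 (in particular all roots of m are real). -/

import Mathlib

open MeasureTheory

private lemma mix_integral {X : Type*} [MeasurableSpace X]
    (P N : Measure X) [IsProbabilityMeasure P] [IsProbabilityMeasure N]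
    (θ : ℝ) (h0 : 0 ≤ θ) (h1 : θ ≤ 1) (f : X → ℝ) (hf : Measurable f)
    (C : ℝ) (hb : ∀ x, |f x| ≤ C) :
    ∫ x, f x ∂(ENNReal.ofReal θ • P + ENNReal.ofReal (1 - θ) • N)
      = θ * ∫ x, f x ∂P + (1 - θ) * ∫ x, f x ∂N := by
  have hP : Integrable f P :=
    (integrable_const C).mono' hf.aestronglyMeasurable (ae_of_all _ hb)
  have hN : Integrable f N :=
    (integrable_const C).mono' hf.aestronglyMeasurable (ae_of_all _ hb)
  rw [integral_add_measure (hP.smul_measure ENNReal.ofReal_ne_top)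
      (hN.smul_measure ENNReal.ofReal_ne_top),
    integral_smul_measure, integral_smul_measure,
    ENNReal.toReal_ofReal h0, ENNReal.toReal_ofReal (by linarith)]
  simp [smul_eq_mul]

private lemma quad_roots (a b c : ℝ) (ha : a ≠ 0) (h : ∃ α, a * α ^ 2 + b * α + c = 0) :
    ∃ r₁ r₂ : ℝ, ∀ α, a * α ^ 2 + b * α + c = 0 ↔ α = r₁ ∨ α = r₂ := by
  obtain ⟨α₀, h0⟩ := h
  refine ⟨α₀, -α₀ - b / a, fun α => ⟨fun h => ?_, fun h => ?_⟩⟩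
  · have key : (α - α₀) * (a * (α + α₀) + b) = 0 := by linear_combination h - h0
    rcases mul_eq_zero.mp key with hk | hk
    · left; linarith [sub_eq_zero.mp hk]
    · right; field_simp; linarith
  · rcases h with h | h
    · rw [h]; exact h0
    · rw [h]; field_simp; linear_combination a * h0

theorem stmt3 {X₁ X₂ : Type*} [MeasurableSpace X₁] [MeasurableSpace X₂]
    (P₁₂ N₁₂ U₁₂ U₁₂' : Measure (X₁ × X₂))
    [IsProbabilityMeasure P₁₂] [IsProbabilityMeasure N₁₂]
    (θ θ' : ℝ) (hθ : θ ∈ Set.Icc (0:ℝ) 1) (hθ' : θ' ∈ Set.Icc (0:ℝ) 1) (hne : θ ≠ θ')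
    (hU : U₁₂ = ENNReal.ofReal θ • P₁₂ + ENNReal.ofReal (1 - θ) • N₁₂)
    (hU' : U₁₂' = ENNReal.ofReal θ' • P₁₂ + ENNReal.ofReal (1 - θ') • N₁₂)
    (g₁ : X₁ → ℝ) (g₂ : X₂ → ℝ) (hg₁ : Measurable g₁) (hg₂ : Measurable g₂)
    (C : ℝ) (hb₁ : ∀ x, |g₁ x| ≤ C) (hb₂ : ∀ x, |g₂ x| ≤ C)
    (m : ℝ → ℝ)
    (hm : ∀ α, m α =
      (α * ∫ x, g₁ x.1 * g₂ x.2 ∂U₁₂ + (1 - α) * ∫ x, g₁ x.1 * g₂ x.2 ∂U₁₂')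
      - (α * ∫ x, g₁ x.1 ∂U₁₂ + (1 - α) * ∫ x, g₁ x.1 ∂U₁₂')
        * (α * ∫ x, g₂ x.2 ∂U₁₂ + (1 - α) * ∫ x, g₂ x.2 ∂U₁₂'))
    (a : ℝ)
    (ha : a = (∫ x, g₁ x.1 ∂U₁₂) * (∫ x, g₂ x.2 ∂U₁₂')
        + (∫ x, g₁ x.1 ∂U₁₂') * (∫ x, g₂ x.2 ∂U₁₂)
        - (∫ x, g₁ x.1 ∂U₁₂) * (∫ x, g₂ x.2 ∂U₁₂)
        - (∫ x, g₁ x.1 ∂U₁₂') * (∫ x, g₂ x.2 ∂U₁₂')) :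
    a = -(θ - θ') ^ 2 *
        (((∫ x, g₁ x.1 ∂P₁₂) - ∫ x, g₁ x.1 ∂N₁₂) * ((∫ x, g₂ x.2 ∂P₁₂) - ∫ x, g₂ x.2 ∂N₁₂))
      ∧
    ((((∫ x, g₁ x.1 ∂P₁₂) - ∫ x, g₁ x.1 ∂N₁₂) * ((∫ x, g₂ x.2 ∂P₁₂) - ∫ x, g₂ x.2 ∂N₁₂)) ≠ 0 →
      (∃ α, m α = 0) →
      ∃ r₁ r₂ : ℝ, ∀ α, m α = 0 ↔ α = r₁ ∨ α = r₂) := by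
  obtain ⟨hθ0, hθ1⟩ := hθ
  obtain ⟨hθ'0, hθ'1⟩ := hθ'
  have hmf1 : Measurable (fun x : X₁ × X₂ => g₁ x.1) := hg₁.comp measurable_fst
  have hmf2 : Measurable (fun x : X₁ × X₂ => g₂ x.2) := hg₂.comp measurable_snd
  have hmf12 : Measurable (fun x : X₁ × X₂ => g₁ x.1 * g₂ x.2) := hmf1.mul hmf2
  have hbnd : ∀ x : X₁ × X₂, |g₁ x.1 * g₂ x.2| ≤ C * C := by
    intro x
    rw [abs_mul]
    exact mul_le_mul (hb₁ x.1) (hb₂ x.2) (abs_nonneg _)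
      (le_trans (abs_nonneg _) (hb₁ x.1))
  have I1 : ∫ x, g₁ x.1 ∂U₁₂ = θ * (∫ x, g₁ x.1 ∂P₁₂) + (1 - θ) * ∫ x, g₁ x.1 ∂N₁₂ := by
    rw [hU]; exact mix_integral P₁₂ N₁₂ θ hθ0 hθ1 _ hmf1 C (fun x => hb₁ x.1)
  have I1' : ∫ x, g₁ x.1 ∂U₁₂' = θ' * (∫ x, g₁ x.1 ∂P₁₂) + (1 - θ') * ∫ x, g₁ x.1 ∂N₁₂ := by
    rw [hU']; exact mix_integral P₁₂ N₁₂ θ' hθ'0 hθ'1 _ hmf1 C (fun x => hb₁ x.1)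
  have I2 : ∫ x, g₂ x.2 ∂U₁₂ = θ * (∫ x, g₂ x.2 ∂P₁₂) + (1 - θ) * ∫ x, g₂ x.2 ∂N₁₂ := by
    rw [hU]; exact mix_integral P₁₂ N₁₂ θ hθ0 hθ1 _ hmf2 C (fun x => hb₂ x.2)
  have I2' : ∫ x, g₂ x.2 ∂U₁₂' = θ' * (∫ x, g₂ x.2 ∂P₁₂) + (1 - θ') * ∫ x, g₂ x.2 ∂N₁₂ := by
    rw [hU']; exact mix_integral P₁₂ N₁₂ θ' hθ'0 hθ'1 _ hmf2 C (fun x => hb₂ x.2)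
  have key : a = -(θ - θ') ^ 2 *
      (((∫ x, g₁ x.1 ∂P₁₂) - ∫ x, g₁ x.1 ∂N₁₂) * ((∫ x, g₂ x.2 ∂P₁₂) - ∫ x, g₂ x.2 ∂N₁₂)) := by
    rw [ha, I1, I1', I2, I2']; ring
  refine ⟨key, fun hprod hroot => ?_⟩
  set A := ∫ x, g₁ x.1 ∂U₁₂
  set A' := ∫ x, g₁ x.1 ∂U₁₂'
  set B := ∫ x, g₂ x.2 ∂U₁₂
  set B' := ∫ x, g₂ x.2 ∂U₁₂'
  set S := ∫ x, g₁ x.1 * g₂ x.2 ∂U₁₂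
  set S' := ∫ x, g₁ x.1 * g₂ x.2 ∂U₁₂'
  have hm' : ∀ α, m α = a * α ^ 2 +
      ((S - S') - A' * (B - B') - B' * (A - A')) * α + (S' - A' * B') := by
    intro α; rw [hm, ha]; ring
  have hane : a ≠ 0 := by
    rw [key]
    exact mul_ne_zero (neg_ne_zero.mpr (pow_ne_zero _ (sub_ne_zero.mpr hne))) hprod
  obtain ⟨α₀, h0⟩ := hroot
  have := quad_roots a ((S - S') - A' * (B - B') - B' * (A - A')) (S' - A' * B') hane
    ⟨α₀, by rw [← hm']; exact h0⟩
  obtain ⟨r₁, r₂, hr⟩ := this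
  exact ⟨r₁, r₂, fun α => by rw [hm']; exact hr α⟩
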